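/- For n ≥ 2, the vector space of Lanczos-type 3-tensors L : Fin n → Fin n → Fin n → ℝ satisfying L_{ij,k} + L_{ji,k} = 0 and L_{ij,k} + L_{jk,i} + L_{ki,j} = 0 has dimension n(n²−1)/3; in particular for n = 4 the dimension is 20 = 24 − 4. -/
import Mathlib

theorem stmt_4 (n : ℕ) (hn : 2 ≤ n)
    (S : Submodule ℝ (Fin n → Fin n → Fin n → ℝ))
    (hS : ∀ L, L ∈ S ↔
      ((∀ i j k, L i j k + L j i k = 0) ∧
        (∀ i j k, L i j k + L j k i + L k i j = 0))) :
    Module.finrank ℝ S = n * (n ^ 2 - 1) / 3 ∧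
      (n = 4 → Module.finrank ℝ S = 20) := by
  classical
  -- the projector onto S
  set P : (Fin n → Fin n → Fin n → ℝ) →ₗ[ℝ] (Fin n → Fin n → Fin n → ℝ) :=
    { toFun := fun L => fun i j k =>
        (L i j k - L j i k - L k i j + L k j i) / 3
      map_add' := by intro L M; funext i j k; simp; ring
      map_smul' := by intro c L; funext i j k; simp; ring } with hP
  have hPapply : ∀ L i j k, P L i j k =
      (L i j k - L j i k - L k i j + L k j i) / 3 := fun _ _ _ _ => rfl
  have hmem : ∀ L, P L ∈ S := by
    intro L
    rw [hS]
    constructor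
    · intro i j k; simp only [hPapply]; ring
    · intro i j k; simp only [hPapply]; ring
  have hid : ∀ L ∈ S, P L = L := by
    intro L hL
    rw [hS] at hL
    obtain ⟨h1, h2⟩ := hL
    funext i j k
    rw [hPapply]
    have a1 := h1 i j k
    have a2 := h1 j k i
    have a3 := h1 k i j
    have b1 := h2 i j k
    linarith
  have hproj : LinearMap.IsProj S P := ⟨hmem, hid⟩
  -- trace of P equals finrank of S
  have htr : LinearMap.trace ℝ _ P = (Module.finrank ℝ S : ℝ) := hproj.trace
  -- conjugate to an endomorphism of (Fin n × Fin n × Fin n) → ℝ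
  set e : (Fin n → Fin n → Fin n → ℝ) ≃ₗ[ℝ] (Fin n × Fin n × Fin n → ℝ) :=
    { toFun := fun L p => L p.1 p.2.1 p.2.2
      invFun := fun f i j k => f (i, j, k)
      map_add' := by intro L M; rfl
      map_smul' := by intro c L; rfl
      left_inv := by intro L; rfl
      right_inv := by intro f; rfl } with he
  have htr2 : LinearMap.trace ℝ _ (e.conj P) = LinearMap.trace ℝ _ P :=
    LinearMap.trace_conj' P e
  have hQapply : ∀ f p, (e.conj P) f p =
      (f (p.1, p.2.1, p.2.2) - f (p.2.1, p.1, p.2.2)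
        - f (p.2.2, p.1, p.2.1) + f (p.2.2, p.2.1, p.1)) / 3 := by
    intro f p; rfl
  -- compute the trace via the standard basis
  have htr3 : LinearMap.trace ℝ _ (e.conj P) = ((n ^ 3 : ℝ) - n) / 3 := by
    rw [LinearMap.trace_eq_matrix_trace ℝ (Pi.basisFun ℝ (Fin n × Fin n × Fin n))]
    rw [Matrix.trace]
    have hdiag : ∀ p : Fin n × Fin n × Fin n,
        (LinearMap.toMatrix (Pi.basisFun ℝ _) (Pi.basisFun ℝ _) (e.conj P)).diag p =
        ((1 : ℝ) - (if p.1 = p.2.1 then 1 else 0)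
          - (if p.1 = p.2.1 ∧ p.2.1 = p.2.2 then 1 else 0)
          + (if p.1 = p.2.2 then 1 else 0)) / 3 := by
      intro p
      rw [Matrix.diag, LinearMap.toMatrix_apply, Pi.basisFun_repr, Pi.basisFun_apply,
        hQapply]
      obtain ⟨i, j, k⟩ := p
      simp only [Pi.single_apply, Prod.mk.injEq]
      have : ((i, j, k) = (i, j, k)) := rfl
      by_cases h1 : i = j
      · subst h1
        by_cases h2 : i = k
        · subst h2; simp
        · simp [h2, Ne.symm h2]
      · by_cases h2 : i = k
        · subst h2; simp [h1, Ne.symm h1]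
        · simp [h1, Ne.symm h1, h2, Ne.symm h2, Prod.ext_iff]
    rw [Finset.sum_congr rfl (fun p _ => hdiag p)]
    have c1 : ∑ _p : Fin n × Fin n × Fin n, (1 : ℝ) = (n : ℝ) ^ 3 := by
      simp [Finset.card_univ]; ring
    have c2 : ∑ p : Fin n × Fin n × Fin n,
        (if p.1 = p.2.1 then (1 : ℝ) else 0) = (n : ℝ) ^ 2 := by
      rw [Fintype.sum_prod_type]
      have inner : ∀ i : Fin n, ∑ p : Fin n × Fin n,
          (if i = p.1 then (1 : ℝ) else 0) = (n : ℝ) := by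
        intro i
        rw [Fintype.sum_prod_type]
        simp [Finset.sum_const, Finset.sum_ite_eq, Finset.card_univ,
          apply_ite Finset.card]
      rw [Finset.sum_congr rfl (fun i _ => inner i)]
      simp [Finset.card_univ]
      ring
    have c3 : ∑ p : Fin n × Fin n × Fin n,
        (if p.1 = p.2.1 ∧ p.2.1 = p.2.2 then (1 : ℝ) else 0) = (n : ℝ) := by
      rw [Fintype.sum_prod_type]
      simp [Fintype.sum_prod_type, Finset.sum_ite_eq, Finset.card_univ, ite_and]
    have c4 : ∑ p : Fin n × Fin n × Fin n,
        (if p.1 = p.2.2 then (1 : ℝ) else 0) = (n : ℝ) ^ 2 := by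
      rw [Fintype.sum_prod_type]
      have inner : ∀ i : Fin n, ∑ p : Fin n × Fin n,
          (if i = p.2 then (1 : ℝ) else 0) = (n : ℝ) := by
        intro i
        rw [Fintype.sum_prod_type]
        simp [Finset.sum_const, Finset.sum_ite_eq, Finset.card_univ,
          apply_ite Finset.card]
      rw [Finset.sum_congr rfl (fun i _ => inner i)]
      simp [Finset.card_univ]
      ring
    simp only [sub_div, add_div]
    rw [Finset.sum_add_distrib, Finset.sum_sub_distrib, Finset.sum_sub_distrib,
      ← Finset.sum_div, ← Finset.sum_div, ← Finset.sum_div, ← Finset.sum_div,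
      c1, c2, c3, c4]
    ring
  -- put things together
  have hfr : (Module.finrank ℝ S : ℝ) = ((n : ℝ) ^ 3 - n) / 3 := by
    rw [← htr, ← htr2, htr3]
  have hle : n ≤ n ^ 3 := Nat.le_self_pow (by norm_num) n
  have hfin : Module.finrank ℝ S * 3 = n ^ 3 - n := by
    have : ((Module.finrank ℝ S * 3 : ℕ) : ℝ) = ((n ^ 3 - n : ℕ) : ℝ) := by
      push_cast [Nat.cast_sub hle]
      linarith [hfr]
    exact_mod_cast this
  have hone : 1 ≤ n ^ 2 := Nat.one_le_pow 2 n (by omega)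
  have hmul : n * (n ^ 2 - 1) = Module.finrank ℝ S * 3 := by
    rw [hfin]
    zify [hone, hle]
    ring
  have hmain : Module.finrank ℝ S = n * (n ^ 2 - 1) / 3 := by
    rw [hmul]
    omega
  exact ⟨hmain, fun h4 => by subst h4; rw [hmain]; norm_num⟩
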